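/- Let μ = C + l_1 + l_2 be a curved symmetric DGLA structure on a ℤ-graded vector space E (a curved L∞-structure whose only components are a 0-form C ∈ E_1, a symmetric vector valued 1-form l_1 of degree +1, and a symmetric vector valued 2-form l_2 of degree +1), and let π ∈ E_0. Then Id_E + π (where Id_E is the identity vector valued 1-form and π is viewed as a 0-form) is a Nijenhuis vector valued form with curvature π, with respect to μ and with square itself, if and only if π is a Maurer–Cartan element of the curved DGLA, i.e. (l_1(π) − C) − (1/2)·l_2(π,π) = 0. -/

import Mathlib

open scoped DirectSum
open Classical

noncomputable section

namespace RN

section Core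

variable (𝕜 : Type) [Field 𝕜] [CharZero 𝕜]
variable (E : ℤ → Type) [∀ i, AddCommGroup (E i)] [∀ i, Module 𝕜 (E i)]

/-- Raw vector-valued forms on the graded vector space `E`: for every arity `n` and every
vector of (input) degrees `ι`, a function on homogeneous tuples with values in the total
graded space `⨁ i, E i`. -/
abbrev RawForm : Type :=
  ∀ n : ℕ, ∀ ι : Fin n → ℤ, (∀ j, E (ι j)) → ⨁ i, E i

/-- Multilinearity (in each slot, on homogeneous arguments). -/
def IsMultilin (F : RawForm E) : Prop :=
  ∀ (n : ℕ) (ι : Fin n → ℤ) (x : ∀ j, E (ι j)) (j : Fin n) (a b : E (ι j)) (c : 𝕜),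
    F n ι (Function.update x j (a + b)) =
        F n ι (Function.update x j a) + F n ι (Function.update x j b) ∧
      F n ι (Function.update x j (c • a)) = c • F n ι (Function.update x j a)

/-- Graded symmetry: swapping two adjacent homogeneous arguments multiplies the value
by the Koszul sign `(-1)^{|X||Y|}`. -/
def IsGradedSym (F : RawForm E) : Prop :=
  ∀ (n : ℕ) (ι : Fin n → ℤ) (x : ∀ j, E (ι j)) (p q : Fin n), (p : ℕ) + 1 = (q : ℕ) →
    F n (fun j => ι (Equiv.swap p q j)) (fun j => x (Equiv.swap p q j)) =
      ((-1 : 𝕜) ^ (ι p * ι q)) • F n ι x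

/-- `F` has degree `d`: its value on homogeneous arguments of degrees `ι` is homogeneous
of degree `(∑ j, ι j) + d`. -/
def IsOfDeg (d : ℤ) (F : RawForm E) : Prop :=
  ∀ (n : ℕ) (ι : Fin n → ℤ) (x : ∀ j, E (ι j)) (m : ℤ),
    m ≠ (∑ j, ι j) + d → F n ι x m = 0

/-- Symmetric vector valued form of degree `d`. -/
def IsSVF (d : ℤ) (F : RawForm E) : Prop :=
  IsMultilin 𝕜 E F ∧ IsGradedSym 𝕜 E F ∧ IsOfDeg E d F

/-- `F` is (concentrated in) a `k`-form. -/
def IsArity (k : ℕ) (F : RawForm E) : Prop :=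
  ∀ n, n ≠ k → ∀ (ι : Fin n → ℤ) (x : ∀ j, E (ι j)), F n ι x = 0

/-- `F` has no 0-form (curvature) component. -/
def NoCurv (F : RawForm E) : Prop :=
  ∀ (ι : Fin 0 → ℤ) (x : ∀ j, E (ι j)), F 0 ι x = 0

/-- `(k, n-k)`-shuffles of `Fin n`. -/
def IsShuffle (k : ℕ) {n : ℕ} (σ : Equiv.Perm (Fin n)) : Prop :=
  ∀ i j : Fin n, i < j → ((j : ℕ) < k ∨ k ≤ (i : ℕ)) → σ i < σ j

/-- The Koszul sign of the rearrangement `(X_{σ(1)},…,X_{σ(n)})` of homogeneous elements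
of degrees `ι`. -/
def koszulSign {n : ℕ} (ι : Fin n → ℤ) (σ : Equiv.Perm (Fin n)) : 𝕜 :=
  ∏ p ∈ Finset.univ.filter (fun p : Fin n × Fin n => p.1 < p.2 ∧ σ p.2 < σ p.1),
    (-1 : 𝕜) ^ (ι (σ p.1) * ι (σ p.2))

/-- Prepend a degree to a vector of degrees. -/
def dcons {n : ℕ} (m : ℤ) (rest : Fin n → ℤ) : Fin (n + 1) → ℤ :=
  fun j => if h : (j : ℕ) = 0 then m else rest ⟨(j : ℕ) - 1, by have := j.isLt; omega⟩

/-- Prepend a homogeneous element to a tuple of homogeneous elements. -/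
def dconsV {n : ℕ} {m : ℤ} {rest : Fin n → ℤ} (v : E m) (xs : ∀ i, E (rest i)) :
    ∀ j : Fin (n + 1), E (dcons m rest j) := fun j => by
  unfold dcons
  by_cases h : (j : ℕ) = 0
  · rw [dif_pos h]; exact v
  · rw [dif_neg h]; exact xs ⟨(j : ℕ) - 1, by have := j.isLt; omega⟩

/-- The insertion operator `ι_F G`, summing over shuffles with Koszul signs. -/
def ins (F G : RawForm E) : RawForm E :=
  fun n ι x =>
    ∑ k : Fin (n + 1),
      ∑ σ ∈ Finset.univ.filter (fun σ : Equiv.Perm (Fin n) => IsShuffle (k : ℕ) σ),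
        koszulSign 𝕜 ι σ •
          DFinsupp.sum
            (F (k : ℕ)
              (fun i => ι (σ ⟨(i : ℕ), by have h1 := i.isLt; have h2 := k.isLt; omega⟩))
              (fun i => x (σ ⟨(i : ℕ), by have h1 := i.isLt; have h2 := k.isLt; omega⟩)))
            (fun m v =>
              G (n - (k : ℕ) + 1)
                (dcons m
                  (fun i => ι (σ ⟨(k : ℕ) + (i : ℕ), by have h1 := i.isLt; have h2 := k.isLt; omega⟩)))
                (dconsV E v
                  (fun i => x (σ ⟨(k : ℕ) + (i : ℕ), by have h1 := i.isLt; have h2 := k.isLt; omega⟩))))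

/-- The Richardson–Nijenhuis bracket `[F,G]_RN = ι_F G - (-1)^{dK·dL} ι_G F` of forms
of degrees `dK` and `dL`. -/
def rnb (dK dL : ℤ) (F G : RawForm E) : RawForm E :=
  fun n ι x => ins 𝕜 E F G n ι x - ((-1 : 𝕜) ^ (dK * dL)) • ins 𝕜 E G F n ι x

/-- An element of the graded vector space, regarded as a vector valued 0-form. -/
def ofElem (v : ⨁ i, E i) : RawForm E := fun n _ _ => if n = 0 then v else 0

/-- The Euler map `S(X) = -|X|·X`, a vector valued 1-form of degree 0. -/
def euler : RawForm E :=
  fun n ι x =>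
    if h : n = 1 then
      (-(ι ⟨0, by omega⟩)) • DirectSum.of E (ι ⟨0, by omega⟩) (x ⟨0, by omega⟩)
    else 0

/-- The identity map of `E`, regarded as a vector valued 1-form of degree 0. -/
def idF : RawForm E :=
  fun n ι x =>
    if h : n = 1 then DirectSum.of E (ι ⟨0, by omega⟩) (x ⟨0, by omega⟩) else 0

/-- The arity-`k` component of a vector valued form. -/
def comp (F : RawForm E) (k : ℕ) : RawForm E :=
  fun n ι x => if n = k then F n ι x else 0

end Core

section Helpers
variable {𝕜 : Type} [Field 𝕜] [CharZero 𝕜]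
variable {E : ℤ → Type} [∀ i, AddCommGroup (E i)] [∀ i, Module 𝕜 (E i)]

theorem apply_congr (F : RawForm E) {n : ℕ} {ι ι' : Fin n → ℤ}
    (x : ∀ j, E (ι j)) (x' : ∀ j, E (ι' j))
    (h : ∀ j, ι j = ι' j) (hx : ∀ j, HEq (x j) (x' j)) : F n ι x = F n ι' x' := by
  have hι : ι = ι' := funext h
  subst hι
  congr 1
  funext j
  exact eq_of_heq (hx j)

instance : Unique (Equiv.Perm (Fin 0)) := ⟨⟨1⟩, fun σ => by ext i; exact i.elim0⟩
instance : Unique (Equiv.Perm (Fin 1)) := ⟨⟨1⟩, fun σ => by ext i; omega⟩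

theorem perm_fin_two (σ : Equiv.Perm (Fin 2)) : σ = 1 ∨ σ = Equiv.swap 0 1 := by
  by_cases h : σ 0 = 0
  · left
    have h1 : σ 1 = 1 := by
      have hne : σ 1 ≠ σ 0 := fun e => by have := σ.injective e; omega
      rw [h] at hne; omega
    ext i
    have : i = 0 ∨ i = 1 := by omega
    rcases this with rfl | rfl <;> simp [h, h1]
  · right
    have h0 : σ 0 = 1 := by omega
    have h1 : σ 1 = 0 := by
      have hne : σ 1 ≠ σ 0 := fun e => by have := σ.injective e; omega
      rw [h0] at hne; omega
    ext i
    have : i = 0 ∨ i = 1 := by omega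
    rcases this with rfl | rfl <;> simp [h0, h1, Equiv.swap_apply_left, Equiv.swap_apply_right]

theorem shuffle_one (k : ℕ) {n : ℕ} : IsShuffle k (1 : Equiv.Perm (Fin n)) :=
  fun i j hij _ => hij

theorem shuffle_ends {k n : ℕ} {σ : Equiv.Perm (Fin n)} (h : IsShuffle k σ)
    (hk : k = 0 ∨ n ≤ k) : σ = 1 := by
  have hsm : StrictMono σ := by
    intro i j hij
    refine h i j hij ?_
    rcases hk with rfl | hk
    · exact Or.inr (Nat.zero_le _)
    · exact Or.inl (lt_of_lt_of_le j.isLt hk)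
  have : (σ : Fin n → Fin n) = id := by
    refine (StrictMono.range_inj hsm strictMono_id).mp ?_
    rw [Set.range_id]
    exact Set.range_eq_univ.mpr σ.surjective
  ext i
  have h2 : σ i = i := congrFun this i
  simp [h2]

theorem filter_shuffle_ends {k n : ℕ} (hk : k = 0 ∨ n ≤ k) :
    (Finset.univ.filter (fun σ : Equiv.Perm (Fin n) => IsShuffle k σ)) = {1} := by
  refine Finset.eq_singleton_iff_unique_mem.mpr ⟨?_, ?_⟩
  · simp [shuffle_one]
  · intro σ hσ
    simp only [Finset.mem_filter] at hσ
    exact shuffle_ends hσ.2 hk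

theorem filter_shuffle_mid2' (k : ℕ) (hk : k = 1) :
    (Finset.univ.filter (fun σ : Equiv.Perm (Fin 2) => IsShuffle k σ)) = Finset.univ := by
  subst hk
  refine Finset.filter_true_of_mem (fun σ _ => ?_)
  intro i j hij hor
  exfalso
  have hij' : (i : ℕ) < (j : ℕ) := hij
  have hi := i.isLt; have hj := j.isLt
  rcases hor with h | h <;> omega

theorem univ_perm_two :
    (Finset.univ : Finset (Equiv.Perm (Fin 2))) = {1, Equiv.swap 0 1} := by
  ext σ
  simp only [Finset.mem_univ, true_iff, Finset.mem_insert, Finset.mem_singleton]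
  exact perm_fin_two σ

theorem one_ne_swap : (1 : Equiv.Perm (Fin 2)) ≠ Equiv.swap 0 1 := by
  intro h
  have := congrFun (congrArg (fun σ : Equiv.Perm (Fin 2) => (σ : Fin 2 → Fin 2)) h) 0
  simp at this

theorem koszul_one {n : ℕ} (ι : Fin n → ℤ) : koszulSign 𝕜 ι 1 = 1 := by
  unfold koszulSign
  rw [Finset.filter_false_of_mem, Finset.prod_empty]
  intro p _ hp
  exact absurd hp.1 (not_lt.mpr (le_of_lt hp.2))

theorem koszul_swap (ι : Fin 2 → ℤ) :
    koszulSign 𝕜 ι (Equiv.swap 0 1) = (-1 : 𝕜) ^ (ι 1 * ι 0) := by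
  unfold koszulSign
  have : (Finset.univ.filter (fun p : Fin 2 × Fin 2 =>
      p.1 < p.2 ∧ Equiv.swap 0 1 p.2 < Equiv.swap 0 1 p.1)) = {((0 : Fin 2), (1 : Fin 2))} := by
    decide
  rw [this, Finset.prod_singleton]
  simp


section NLemmas
variable (π : E 0)

theorem N_zero (ι : Fin 0 → ℤ) (x : ∀ j, E (ι j)) :
    (ofElem E (DirectSum.of E 0 π) + idF E) 0 ι x = DirectSum.of E 0 π := by
  simp [ofElem, idF, Pi.add_apply]

theorem N_one (ι : Fin 1 → ℤ) (x : ∀ j, E (ι j)) (h : (0:ℕ) < 1) :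
    (ofElem E (DirectSum.of E 0 π) + idF E) 1 ι x =
      DirectSum.of E (ι ⟨0, h⟩) (x ⟨0, h⟩) := by
  simp [ofElem, idF, Pi.add_apply]

theorem N_other {n : ℕ} (hn0 : n ≠ 0) (hn1 : n ≠ 1) (ι : Fin n → ℤ) (x : ∀ j, E (ι j)) :
    (ofElem E (DirectSum.of E 0 π) + idF E) n ι x = 0 := by
  simp [ofElem, idF, Pi.add_apply, hn0, hn1]

/-- inserting a `0` in some slot kills the form -/
def SlotZero (F : RawForm E) : Prop :=
  ∀ (n : ℕ) (a : Fin n → ℤ) (y : ∀ j, E (a j)) (j : Fin n), y j = 0 → F n a y = 0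

theorem slotZero_of_multilin {F : RawForm E} (h : IsMultilin 𝕜 E F) : SlotZero F := by
  intro n a y j hy
  have h2 := (h n a y j 0 0 0).2
  rw [smul_zero, zero_smul] at h2
  have h3 : Function.update y j 0 = y := by
    rw [← hy]; exact Function.update_eq_self j y
  rwa [h3] at h2

theorem top_term (F : RawForm E) (j : ℕ) (hj : j = 0) (rest : Fin j → ℤ)
    (xs : ∀ i, E (rest i)) (w : ⨁ i, E i) :
    DFinsupp.sum w (fun m v =>
        (ofElem E (DirectSum.of E 0 π) + idF E) (j + 1) (dcons m rest) (dconsV E v xs)) = w := by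
  subst hj
  have key : ∀ (m : ℤ) (v : E m),
      (ofElem E (DirectSum.of E 0 π) + idF E) (0 + 1) (dcons m rest) (dconsV E v xs) =
        DirectSum.of E m v := by
    intro m v
    rw [N_one π (dcons m rest) (dconsV E v xs) Nat.one_pos]
    rfl
  rw [show (fun (m : ℤ) (v : E m) =>
      (ofElem E (DirectSum.of E 0 π) + idF E) (0 + 1) (dcons m rest) (dconsV E v xs)) =
      fun m v => DirectSum.of E m v from funext fun m => funext fun v => key m v]
  exact DFinsupp.sum_single

theorem ins_F_N (F : RawForm E) (n : ℕ) (ι : Fin n → ℤ) (x : ∀ j, E (ι j)) :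
    ins 𝕜 E F (ofElem E (DirectSum.of E 0 π) + idF E) n ι x = F n ι x := by
  simp only [ins]
  rw [Finset.sum_eq_single (Fin.last n)]
  · rw [filter_shuffle_ends (Or.inr (le_of_eq (Fin.val_last n).symm)),
      Finset.sum_singleton, koszul_one, one_smul,
      top_term π F _ (by simp) _ _ _]
    rfl
  · intro k _ hk
    refine Finset.sum_eq_zero (fun σ _ => ?_)
    have hkn : (k : ℕ) ≠ n := fun e => hk (Fin.ext (by simp [e, Fin.val_last]))
    have hklt : (k : ℕ) < n := by have := k.isLt; omega
    refine smul_eq_zero_of_right _ ?_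
    refine DFinsupp.sum_eq_zero (fun m => ?_)
    exact N_other π (by omega) (by omega) _ _
  · simp


theorem term_insert_pi (F : RawForm E) (hz : SlotZero F) (j : ℕ) (hj : j = 0)
    (a : Fin j → ℤ) (y : ∀ i, E (a i)) (q : ℕ) (rest : Fin q → ℤ) (xs : ∀ i, E (rest i)) :
    DFinsupp.sum ((ofElem E (DirectSum.of E 0 π) + idF E) j a y)
        (fun m v => F (q + 1) (dcons m rest) (dconsV E v xs)) =
      F (q + 1) (dcons 0 rest) (dconsV E π xs) := by
  subst hj
  rw [N_zero, show DirectSum.of E 0 π = DFinsupp.single 0 π from rfl]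
  exact DFinsupp.sum_single_index (hz _ _ _ ⟨0, Nat.succ_pos q⟩ rfl)

theorem term_insert_x (F : RawForm E) (hz : SlotZero F) (j : ℕ) (hj : j = 1)
    (a : Fin j → ℤ) (y : ∀ i, E (a i)) (q : ℕ) (rest : Fin q → ℤ) (xs : ∀ i, E (rest i))
    (h0 : 0 < j) :
    DFinsupp.sum ((ofElem E (DirectSum.of E 0 π) + idF E) j a y)
        (fun m v => F (q + 1) (dcons m rest) (dconsV E v xs)) =
      F (q + 1) (dcons (a ⟨0, h0⟩) rest) (dconsV E (y ⟨0, h0⟩) xs) := by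
  subst hj
  rw [N_one π a y Nat.one_pos,
    show DirectSum.of E (a ⟨0, Nat.one_pos⟩) (y ⟨0, Nat.one_pos⟩) =
      DFinsupp.single (a ⟨0, Nat.one_pos⟩) (y ⟨0, Nat.one_pos⟩) from rfl]
  exact DFinsupp.sum_single_index (hz _ _ _ ⟨0, Nat.succ_pos q⟩ rfl)

theorem ins_N_big (F : RawForm E) (hv : ∀ (m : ℕ) (a : Fin m → ℤ) (y : ∀ i, E (a i)),
      3 ≤ m → F m a y = 0) {n : ℕ} (hn : 3 ≤ n) (ι : Fin n → ℤ) (x : ∀ j, E (ι j)) :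
    ins 𝕜 E (ofElem E (DirectSum.of E 0 π) + idF E) F n ι x = 0 := by
  simp only [ins]
  refine Finset.sum_eq_zero (fun k _ => ?_)
  refine Finset.sum_eq_zero (fun σ _ => ?_)
  refine smul_eq_zero_of_right _ ?_
  by_cases hk0 : (k : ℕ) = 0
  · exact DFinsupp.sum_eq_zero (fun m => hv _ _ _ (by omega))
  · by_cases hk1 : (k : ℕ) = 1
    · exact DFinsupp.sum_eq_zero (fun m => hv _ _ _ (by omega))
    · rw [N_other π hk0 hk1, DFinsupp.sum_zero_index]

theorem ins_N_0 (F : RawForm E) (hz : SlotZero F) (ι : Fin 0 → ℤ) (x : ∀ j, E (ι j)) :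
    ins 𝕜 E (ofElem E (DirectSum.of E 0 π) + idF E) F 0 ι x =
      F 1 (dcons 0 ι) (dconsV E π x) := by
  simp only [ins]
  rw [Fin.sum_univ_one, filter_shuffle_ends (Or.inr (Nat.zero_le _)),
    Finset.sum_singleton, koszul_one, one_smul,
    term_insert_pi π F hz _ (by decide) _ _ _ _ _]
  refine apply_congr F (n := 1) _ _ (fun j => ?_) (fun j => ?_)
  · match j with
    | ⟨0, h⟩ => rfl
    | ⟨jv+1, h⟩ => exact absurd h (by omega)
  · match j with
    | ⟨0, h⟩ => exact HEq.rfl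
    | ⟨jv+1, h⟩ => exact absurd h (by omega)


theorem ins_N_1 (F : RawForm E) (hz : SlotZero F) (ι : Fin 1 → ℤ) (x : ∀ j, E (ι j)) :
    ins 𝕜 E (ofElem E (DirectSum.of E 0 π) + idF E) F 1 ι x =
      F 2 (dcons 0 ι) (dconsV E π x) + F 1 ι x := by
  simp only [ins]
  rw [Fin.sum_univ_two]
  congr 1
  · rw [filter_shuffle_ends (Or.inl (by decide)), Finset.sum_singleton, koszul_one, one_smul,
      term_insert_pi π F hz _ (by decide) _ _ _ _ _]
    refine apply_congr F (n := 2) _ _ (fun j => ?_) (fun j => ?_)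
    · match j with
      | ⟨0, h⟩ => rfl
      | ⟨1, h⟩ => rfl
      | ⟨jv+2, h⟩ => exact absurd h (by omega)
    · match j with
      | ⟨0, h⟩ => exact HEq.rfl
      | ⟨1, h⟩ => exact HEq.rfl
      | ⟨jv+2, h⟩ => exact absurd h (by omega)
  · rw [filter_shuffle_ends (Or.inr (by decide)), Finset.sum_singleton, koszul_one, one_smul,
      term_insert_x π F hz _ (by decide) _ _ _ _ _ (by decide)]
    refine apply_congr F (n := 1) _ _ (fun j => ?_) (fun j => ?_)
    · match j with
      | ⟨0, h⟩ => rfl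
      | ⟨jv+1, h⟩ => exact absurd h (by omega)
    · match j with
      | ⟨0, h⟩ => exact HEq.rfl
      | ⟨jv+1, h⟩ => exact absurd h (by omega)

theorem ins_N_2 (F : RawForm E) (hz : SlotZero F) (ι : Fin 2 → ℤ) (x : ∀ j, E (ι j)) :
    ins 𝕜 E (ofElem E (DirectSum.of E 0 π) + idF E) F 2 ι x =
      F 3 (dcons 0 ι) (dconsV E π x) +
        (F 2 ι x + koszulSign 𝕜 ι (Equiv.swap 0 1) •
          F 2 (fun j => ι (Equiv.swap 0 1 j)) (fun j => x (Equiv.swap 0 1 j))) := by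
  simp only [ins]
  rw [Fin.sum_univ_three]
  have hk2 : (∑ σ ∈ Finset.univ.filter
      (fun σ : Equiv.Perm (Fin 2) => IsShuffle ((2 : Fin 3) : ℕ) σ),
      koszulSign 𝕜 ι σ •
        DFinsupp.sum ((ofElem E (DirectSum.of E 0 π) + idF E) ((2 : Fin 3) : ℕ)
          (fun i => ι (σ ⟨(i : ℕ), by omega⟩)) (fun i => x (σ ⟨(i : ℕ), by omega⟩)))
          (fun m v => F (2 - ((2 : Fin 3) : ℕ) + 1)
            (dcons m (fun i => ι (σ ⟨((2 : Fin 3) : ℕ) + (i : ℕ), by omega⟩)))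
            (dconsV E v (fun i => x (σ ⟨((2 : Fin 3) : ℕ) + (i : ℕ), by omega⟩))))) = 0 := by
    refine Finset.sum_eq_zero (fun σ _ => ?_)
    rw [N_other π (by decide) (by decide), DFinsupp.sum_zero_index, smul_zero]
  rw [hk2, add_zero]
  congr 1
  · rw [filter_shuffle_ends (Or.inl (by decide)), Finset.sum_singleton, koszul_one, one_smul,
      term_insert_pi π F hz _ (by decide) _ _ _ _ _]
    refine apply_congr F (n := 3) _ _ (fun j => ?_) (fun j => ?_)
    · match j with
      | ⟨0, h⟩ => rfl
      | ⟨1, h⟩ => rfl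
      | ⟨2, h⟩ => rfl
      | ⟨jv+3, h⟩ => exact absurd h (by omega)
    · match j with
      | ⟨0, h⟩ => exact HEq.rfl
      | ⟨1, h⟩ => exact HEq.rfl
      | ⟨2, h⟩ => exact HEq.rfl
      | ⟨jv+3, h⟩ => exact absurd h (by omega)
  · rw [filter_shuffle_mid2' _ (by decide), univ_perm_two, Finset.sum_pair one_ne_swap]
    congr 1
    · rw [koszul_one, one_smul, term_insert_x π F hz _ (by decide) _ _ _ _ _ (by decide)]
      refine apply_congr F (n := 2) _ _ (fun j => ?_) (fun j => ?_)
      · match j with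
        | ⟨0, h⟩ => rfl
        | ⟨1, h⟩ => rfl
        | ⟨jv+2, h⟩ => exact absurd h (by omega)
      · match j with
        | ⟨0, h⟩ => exact HEq.rfl
        | ⟨1, h⟩ => exact HEq.rfl
        | ⟨jv+2, h⟩ => exact absurd h (by omega)
    · rw [term_insert_x π F hz _ (by decide) _ _ _ _ _ (by decide)]
      congr 1
      refine apply_congr F (n := 2) _ _ (fun j => ?_) (fun j => ?_)
      · match j with
        | ⟨0, h⟩ => rfl
        | ⟨1, h⟩ => rfl
        | ⟨jv+2, h⟩ => exact absurd h (by omega)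
      · match j with
        | ⟨0, h⟩ => exact HEq.rfl
        | ⟨1, h⟩ => exact HEq.rfl
        | ⟨jv+2, h⟩ => exact absurd h (by omega)


theorem sign_cancel (a b : ℤ) (w : ⨁ i, E i) :
    ((-1 : 𝕜) ^ (a * b)) • (((-1 : 𝕜) ^ (b * a)) • w) = w := by
  rw [smul_smul, mul_comm b a, ← zpow_add₀ (by norm_num : (-1 : 𝕜) ≠ 0),
    Even.neg_one_zpow ⟨a * b, rfl⟩, one_smul]

variable (C : E 1) (l1 l2 : RawForm E)

theorem mu_zero (h1a : IsArity E 1 l1) (h2a : IsArity E 2 l2)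
    (a : Fin 0 → ℤ) (y : ∀ j, E (a j)) :
    (ofElem E (DirectSum.of E 1 C) + l1 + l2) 0 a y = DirectSum.of E 1 C := by
  show ofElem E (DirectSum.of E 1 C) 0 a y + l1 0 a y + l2 0 a y = _
  rw [h1a 0 (by omega) a y, h2a 0 (by omega) a y]
  simp [ofElem]

theorem mu_one (h2a : IsArity E 2 l2) (a : Fin 1 → ℤ) (y : ∀ j, E (a j)) :
    (ofElem E (DirectSum.of E 1 C) + l1 + l2) 1 a y = l1 1 a y := by
  show ofElem E (DirectSum.of E 1 C) 1 a y + l1 1 a y + l2 1 a y = _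
  rw [h2a 1 (by omega) a y]
  simp [ofElem]

theorem mu_two (h1a : IsArity E 1 l1) (a : Fin 2 → ℤ) (y : ∀ j, E (a j)) :
    (ofElem E (DirectSum.of E 1 C) + l1 + l2) 2 a y = l2 2 a y := by
  show ofElem E (DirectSum.of E 1 C) 2 a y + l1 2 a y + l2 2 a y = _
  rw [h1a 2 (by omega) a y]
  simp [ofElem]

theorem mu_big (h1a : IsArity E 1 l1) (h2a : IsArity E 2 l2)
    (m : ℕ) (a : Fin m → ℤ) (y : ∀ j, E (a j)) (hm : 3 ≤ m) :
    (ofElem E (DirectSum.of E 1 C) + l1 + l2) m a y = 0 := by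
  show ofElem E (DirectSum.of E 1 C) m a y + l1 m a y + l2 m a y = _
  rw [h1a m (by omega) a y, h2a m (by omega) a y]
  simp only [ofElem]
  rw [if_neg (by omega : ¬ m = 0)]
  simp

theorem mu_slotzero (h1m : IsMultilin 𝕜 E l1) (h2m : IsMultilin 𝕜 E l2) :
    SlotZero (ofElem E (DirectSum.of E 1 C) + l1 + l2) := by
  intro n a y j hy
  have hn : ¬ n = 0 := by rintro rfl; exact j.elim0
  show ofElem E (DirectSum.of E 1 C) n a y + l1 n a y + l2 n a y = 0
  rw [slotZero_of_multilin h1m n a y j hy, slotZero_of_multilin h2m n a y j hy]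
  simp [ofElem, hn]

theorem rnb_pt (F G : RawForm E) (n : ℕ) (ι : Fin n → ℤ) (x : ∀ j, E (ι j)) :
    rnb 𝕜 E 0 1 F G n ι x = ins 𝕜 E F G n ι x - ins 𝕜 E G F n ι x := by
  simp [rnb]

theorem l1_cons_congr (ι : Fin 0 → ℤ) (x : ∀ j, E (ι j)) :
    l1 1 (dcons 0 ι) (dconsV E π x) = l1 1 (fun _ => (0 : ℤ)) (fun _ => π) := by
  refine apply_congr l1 (n := 1) _ _ (fun j => ?_) (fun j => ?_)
  · match j with
    | ⟨0, h⟩ => rfl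
    | ⟨jv+1, h⟩ => exact absurd h (by omega)
  · match j with
    | ⟨0, h⟩ => exact HEq.rfl
    | ⟨jv+1, h⟩ => exact absurd h (by omega)

theorem l2_cons_congr (ι : Fin 0 → ℤ) (x : ∀ j, E (ι j)) :
    l2 2 (dcons 0 (dcons 0 ι)) (dconsV E π (dconsV E π x)) =
      l2 2 (fun _ => (0 : ℤ)) (fun _ => π) := by
  refine apply_congr l2 (n := 2) _ _ (fun j => ?_) (fun j => ?_)
  · match j with
    | ⟨0, h⟩ => rfl
    | ⟨1, h⟩ => rfl
    | ⟨jv+2, h⟩ => exact absurd h (by omega)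
  · match j with
    | ⟨0, h⟩ => exact HEq.rfl
    | ⟨1, h⟩ => exact HEq.rfl
    | ⟨jv+2, h⟩ => exact absurd h (by omega)

section DLemmas

theorem D_zero (h1m : IsMultilin 𝕜 E l1) (h2m : IsMultilin 𝕜 E l2)
    (h1a : IsArity E 1 l1) (h2a : IsArity E 2 l2) (ι : Fin 0 → ℤ) (x : ∀ j, E (ι j)) :
    rnb 𝕜 E 0 1 (ofElem E (DirectSum.of E 0 π) + idF E)
        (ofElem E (DirectSum.of E 1 C) + l1 + l2) 0 ι x =
      l1 1 (fun _ => (0 : ℤ)) (fun _ => π) - DirectSum.of E 1 C := by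
  rw [rnb_pt, ins_F_N, ins_N_0 π _ (mu_slotzero C l1 l2 h1m h2m),
    mu_one C l1 l2 h2a, mu_zero C l1 l2 h1a h2a, l1_cons_congr π l1 ι x]

theorem D_one (h1m : IsMultilin 𝕜 E l1) (h2m : IsMultilin 𝕜 E l2)
    (h1a : IsArity E 1 l1) (ι : Fin 1 → ℤ) (x : ∀ j, E (ι j)) :
    rnb 𝕜 E 0 1 (ofElem E (DirectSum.of E 0 π) + idF E)
        (ofElem E (DirectSum.of E 1 C) + l1 + l2) 1 ι x =
      l2 2 (dcons 0 ι) (dconsV E π x) := by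
  rw [rnb_pt, ins_F_N, ins_N_1 π _ (mu_slotzero C l1 l2 h1m h2m),
    add_sub_cancel_right, mu_two C l1 l2 h1a]

theorem D_two (h1m : IsMultilin 𝕜 E l1) (h2m : IsMultilin 𝕜 E l2)
    (h1a : IsArity E 1 l1) (h2a : IsArity E 2 l2) (h2s : IsGradedSym 𝕜 E l2) (ι : Fin 2 → ℤ) (x : ∀ j, E (ι j)) :
    rnb 𝕜 E 0 1 (ofElem E (DirectSum.of E 0 π) + idF E)
        (ofElem E (DirectSum.of E 1 C) + l1 + l2) 2 ι x =
      l2 2 ι x := by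
  rw [rnb_pt, ins_F_N, ins_N_2 π _ (mu_slotzero C l1 l2 h1m h2m),
    mu_big C l1 l2 h1a h2a 3 _ _ (by omega), zero_add,
    mu_two C l1 l2 h1a, mu_two C l1 l2 h1a, add_sub_cancel_left,
    koszul_swap, h2s 2 ι x 0 1 (by decide), sign_cancel]

theorem D_big (h1a : IsArity E 1 l1) (h2a : IsArity E 2 l2) (m : ℕ) (hm : 3 ≤ m) (ι : Fin m → ℤ) (x : ∀ j, E (ι j)) :
    rnb 𝕜 E 0 1 (ofElem E (DirectSum.of E 0 π) + idF E)
        (ofElem E (DirectSum.of E 1 C) + l1 + l2) m ι x = 0 := by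
  rw [rnb_pt, ins_F_N, ins_N_big π _ (mu_big C l1 l2 h1a h2a) hm,
    mu_big C l1 l2 h1a h2a m ι x hm, sub_zero]

theorem D_slotzero (h1m : IsMultilin 𝕜 E l1) (h2m : IsMultilin 𝕜 E l2)
    (h1a : IsArity E 1 l1) (h2a : IsArity E 2 l2) (h2s : IsGradedSym 𝕜 E l2) :
    SlotZero (rnb 𝕜 E 0 1 (ofElem E (DirectSum.of E 0 π) + idF E)
        (ofElem E (DirectSum.of E 1 C) + l1 + l2)) := by
  intro n a y j hy
  rcases n with _ | n
  · exact j.elim0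
  rcases n with _ | n
  · rw [D_one π C l1 l2 h1m h2m h1a]
    have hy0 : y ⟨0, Nat.one_pos⟩ = 0 := by
      rwa [show (⟨0, Nat.one_pos⟩ : Fin 1) = j from Subsingleton.elim _ _]
    have hkey : dconsV E π y ⟨1, Nat.one_lt_two⟩ = 0 := by
      rw [show dconsV E π y ⟨1, Nat.one_lt_two⟩ = y ⟨0, Nat.one_pos⟩ from rfl, hy0]; rfl
    exact slotZero_of_multilin h2m _ _ _ ⟨1, Nat.one_lt_two⟩ hkey
  rcases n with _ | n
  · rw [D_two π C l1 l2 h1m h2m h1a h2a h2s]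
    exact slotZero_of_multilin h2m _ _ _ j hy
  · exact D_big π C l1 l2 h1a h2a _ (by omega) a y

end DLemmas
end NLemmas
end Helpers


/-- Let `μ = C + l₁ + l₂` be a curved symmetric DGLA structure on `E` and
`π ∈ E₀`.  Then `Id_E + π` is a Nijenhuis vector valued form with curvature `π`, with respect
to `μ` and with square itself, iff `π` is a Maurer–Cartan element of the curved DGLA, i.e.
`(l₁(π) - C) - ½ l₂(π,π) = 0`. -/
theorem statement15 (𝕜 : Type) [Field 𝕜] [CharZero 𝕜]
    (E : ℤ → Type) [∀ i, AddCommGroup (E i)] [∀ i, Module 𝕜 (E i)]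
    (C : E 1) (l1 l2 : RawForm E)
    (h1 : IsSVF 𝕜 E 1 l1) (h1a : IsArity E 1 l1)
    (h2 : IsSVF 𝕜 E 1 l2) (h2a : IsArity E 2 l2)
    (μ : RawForm E) (hμ : μ = ofElem E (DirectSum.of E 1 C) + l1 + l2)
    (hμμ : rnb 𝕜 E 1 1 μ μ = 0) (π : E 0) :
    (rnb 𝕜 E 0 1 (ofElem E (DirectSum.of E 0 π) + idF E)
          (rnb 𝕜 E 0 1 (ofElem E (DirectSum.of E 0 π) + idF E) μ) =
        rnb 𝕜 E 0 1 (ofElem E (DirectSum.of E 0 π) + idF E) μ ∧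
      rnb 𝕜 E 0 0 (ofElem E (DirectSum.of E 0 π) + idF E)
        (ofElem E (DirectSum.of E 0 π) + idF E) = 0) ↔
      l1 1 (fun _ => (0 : ℤ)) (fun _ => π) - DirectSum.of E 1 C -
          (2 : 𝕜)⁻¹ • l2 2 (fun _ => (0 : ℤ)) (fun _ => π) = 0 := by

  subst hμ
  obtain ⟨h1m, h1s, h1d⟩ := h1
  obtain ⟨h2m, h2s, h2d⟩ := h2
  have hDslot := D_slotzero π C l1 l2 h1m h2m h1a h2a h2s
  have htwo : (2 : 𝕜) ≠ 0 := by norm_num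
  constructor
  · rintro ⟨hc1, -⟩
    have hpt := congrFun (congrFun (congrFun hc1 0) Fin.elim0) (fun j => j.elim0)
    rw [D_zero π C l1 l2 h1m h2m h1a h2a, rnb_pt, ins_F_N, ins_N_0 π _ hDslot,
      D_one π C l1 l2 h1m h2m h1a, D_zero π C l1 l2 h1m h2m h1a h2a,
      l2_cons_congr π l2] at hpt
    have hQ2 := sub_eq_iff_eq_add.mp hpt
    rw [hQ2, ← two_smul 𝕜, smul_smul, inv_mul_cancel₀ htwo, one_smul, sub_self]
  · intro hMC
    have hA := sub_eq_zero.mp hMC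
    have hQ : l2 2 (fun _ => (0 : ℤ)) (fun _ => π) =
        (l1 1 (fun _ => (0 : ℤ)) (fun _ => π) - DirectSum.of E 1 C) +
          (l1 1 (fun _ => (0 : ℤ)) (fun _ => π) - DirectSum.of E 1 C) := by
      have hh : (2 : 𝕜) • ((2 : 𝕜)⁻¹ • l2 2 (fun _ => (0 : ℤ)) (fun _ => π)) =
          l2 2 (fun _ => (0 : ℤ)) (fun _ => π) := by
        rw [smul_smul, mul_inv_cancel₀ htwo, one_smul]
      rw [← hA] at hh
      rw [← hh, two_smul]
    constructor
    · refine funext fun n => funext fun ι => funext fun x => ?_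
      rcases n with _ | n
      · rw [D_zero π C l1 l2 h1m h2m h1a h2a ι x, rnb_pt, ins_F_N, ins_N_0 π _ hDslot,
          D_one π C l1 l2 h1m h2m h1a, D_zero π C l1 l2 h1m h2m h1a h2a,
          l2_cons_congr π l2, hQ]
        exact add_sub_cancel_right _ _
      rcases n with _ | n
      · rw [D_one π C l1 l2 h1m h2m h1a ι x, rnb_pt, ins_F_N, ins_N_1 π _ hDslot,
          D_two π C l1 l2 h1m h2m h1a h2a h2s, D_one π C l1 l2 h1m h2m h1a]
        exact add_sub_cancel_right _ _
      rcases n with _ | n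
      · rw [D_two π C l1 l2 h1m h2m h1a h2a h2s ι x, rnb_pt, ins_F_N, ins_N_2 π _ hDslot,
          D_big π C l1 l2 h1a h2a 3 (by omega),
          D_two π C l1 l2 h1m h2m h1a h2a h2s ι x,
          D_two π C l1 l2 h1m h2m h1a h2a h2s
            (fun j => ι (Equiv.swap 0 1 j)) (fun j => x (Equiv.swap 0 1 j)),
          koszul_swap, h2s 2 ι x 0 1 (by decide), sign_cancel, zero_add]
        exact add_sub_cancel_right _ _
      · have hDb := D_big (𝕜 := 𝕜) π C l1 l2 h1a h2a
        rw [hDb (n+3) (by omega) ι x, rnb_pt, ins_F_N,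
          ins_N_big π _ (fun mm a y hm => hDb mm hm a y) (by omega),
          hDb (n+3) (by omega) ι x, sub_zero]
    · refine funext fun n => funext fun ι => funext fun x => ?_
      simp [rnb]


end RN
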